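/- arXiv:1912.01904 — 4 statements merged into one kernel-verified Lean document; each statement's English description precedes it below -/
import Mathlib

section
/- Let e₁, …, eₙ and τ₁, …, τₙ be vectors in ℝ² with each family nonzero and pairwise non-parallel, n ≥ 3. Suppose J ⊆ {1,…,n}, |J| ≥ 2, is of maximum size such that span_ℤ({τⱼ : j ∈ J} ∪ {e_{j'} : j' ∉ J}) is discrete. Then J is maximal with the property that T(J) = span_ℤ{τⱼ : j ∈ J} is discrete. -/
open Set

set_option maxHeartbeats 2000000

lemma aux_torsion (G : AddSubgroup (ℝ × ℝ)) (hG : DiscreteTopology G)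
    {v w x : ℝ × ℝ} (hli : LinearIndependent ℝ ![v, w])
    (hvG : v ∈ G) (hwG : w ∈ G) (hx : x ∈ G) :
    ∃ N : ℤ, N ≠ 0 ∧ N • x ∈ AddSubgroup.closure {v, w} := by
  have hcard : Fintype.card (Fin 2) = Module.finrank ℝ (ℝ × ℝ) := by simp
  let B := basisOfLinearIndependentOfCardEqFinrank hli hcard
  have hB0 : B 0 = v := by
    simp [B, coe_basisOfLinearIndependentOfCardEqFinrank]
  have hB1 : B 1 = w := by
    simp [B, coe_basisOfLinearIndependentOfCardEqFinrank]
  have hrv0 : B.repr v 0 = 1 := by rw [← hB0, B.repr_self]; simp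
  have hrv1 : B.repr v 1 = 0 := by rw [← hB0, B.repr_self]; simp
  have hrw0 : B.repr w 0 = 0 := by rw [← hB1, B.repr_self]; simp
  have hrw1 : B.repr w 1 = 1 := by rw [← hB1, B.repr_self]; simp
  let a : ℕ → ℝ := fun k => B.repr ((k : ℤ) • x) 0
  let b : ℕ → ℝ := fun k => B.repr ((k : ℤ) • x) 1
  let r : ℕ → ℝ × ℝ := fun k => (k : ℤ) • x - ⌊a k⌋ • v - ⌊b k⌋ • w
  let K : Set (ℝ × ℝ) :=
    (fun p : ℝ × ℝ => p.1 • v + p.2 • w) '' (Set.Icc 0 1 ×ˢ Set.Icc 0 1)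
  have hKcpt : IsCompact K :=
    (isCompact_Icc.prod isCompact_Icc).image
      ((continuous_fst.smul continuous_const).add (continuous_snd.smul continuous_const))
  have hrG : ∀ k, r k ∈ G := fun k =>
    sub_mem (sub_mem (zsmul_mem hx _) (zsmul_mem hvG _)) (zsmul_mem hwG _)
  have ha' : ∀ k, a k = (k : ℤ) • (B.repr x 0) := fun k => by
    show B.repr ((k : ℤ) • x) 0 = _
    rw [map_zsmul, Finsupp.smul_apply]
  have hb' : ∀ k, b k = (k : ℤ) • (B.repr x 1) := fun k => by
    show B.repr ((k : ℤ) • x) 1 = _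
    rw [map_zsmul, Finsupp.smul_apply]
  have hrepr0 : ∀ k, B.repr (r k) 0 = Int.fract (a k) := by
    intro k
    show B.repr ((k : ℤ) • x - ⌊a k⌋ • v - ⌊b k⌋ • w) 0 = _
    simp only [map_sub, Finsupp.sub_apply, map_zsmul, Finsupp.smul_apply,
      hrv0, hrw0, Int.fract, ← ha' k]
    simp only [zsmul_eq_mul, mul_one, mul_zero, sub_zero]
  have hrepr1 : ∀ k, B.repr (r k) 1 = Int.fract (b k) := by
    intro k
    show B.repr ((k : ℤ) • x - ⌊a k⌋ • v - ⌊b k⌋ • w) 1 = _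
    simp only [map_sub, Finsupp.sub_apply, map_zsmul, Finsupp.smul_apply,
      hrv1, hrw1, Int.fract, ← hb' k]
    simp only [zsmul_eq_mul, mul_one, mul_zero, sub_zero]
  have hexpand : ∀ k, r k = (B.repr (r k) 0) • v + (B.repr (r k) 1) • w := by
    intro k
    conv_lhs => rw [← B.sum_repr (r k)]
    rw [Fin.sum_univ_two, hB0, hB1]
  have hrK : ∀ k, r k ∈ K := by
    intro k
    have hmem : ((Int.fract (a k), Int.fract (b k)) : ℝ × ℝ)
        ∈ Set.Icc (0:ℝ) 1 ×ˢ Set.Icc (0:ℝ) 1 :=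
      ⟨⟨Int.fract_nonneg _, le_of_lt (Int.fract_lt_one _)⟩,
       ⟨Int.fract_nonneg _, le_of_lt (Int.fract_lt_one _)⟩⟩
    have himg := Set.mem_image_of_mem (fun p : ℝ × ℝ => p.1 • v + p.2 • w) hmem
    have hre : r k = (fun p : ℝ × ℝ => p.1 • v + p.2 • w)
        (Int.fract (a k), Int.fract (b k)) := by
      simp only
      rw [← hrepr0, ← hrepr1]
      exact hexpand k
    rw [hre]
    exact himg
  have hclosed : IsClosed (G : Set (ℝ × ℝ)) := AddSubgroup.isClosed_of_discrete
  have hdisc' : DiscreteTopology ↥((G : Set (ℝ × ℝ)) ∩ K) :=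
    DiscreteTopology.of_subset hG Set.inter_subset_left
  have hfin : Set.Finite ((G : Set (ℝ × ℝ)) ∩ K) :=
    (hKcpt.inter_left hclosed).finite (isDiscrete_iff_discreteTopology.mpr hdisc')
  obtain ⟨k, -, l, -, hkl, heq⟩ :=
    Set.infinite_univ.exists_ne_map_eq_of_mapsTo
      (f := r) (fun k _ => Set.mem_inter (hrG k) (hrK k)) hfin
  refine ⟨(k : ℤ) - l, ?_, ?_⟩
  · intro h
    exact hkl (by exact_mod_cast sub_eq_zero.mp h)
  · have h2 : (k : ℤ) • x - (⌊a k⌋ : ℤ) • v - (⌊b k⌋ : ℤ) • w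
        = (l : ℤ) • x - (⌊a l⌋ : ℤ) • v - (⌊b l⌋ : ℤ) • w := heq
    have key : ((k : ℤ) - l) • x = (⌊a k⌋ - ⌊a l⌋) • v + (⌊b k⌋ - ⌊b l⌋) • w := by
      rw [sub_smul, sub_smul, sub_smul]
      have h3 : (k : ℤ) • x - ⌊a k⌋ • v - ⌊b k⌋ • w
          - ((l : ℤ) • x - ⌊a l⌋ • v - ⌊b l⌋ • w) = 0 := sub_eq_zero.mpr h2
      have h4 : (k : ℤ) • x - (l : ℤ) • x
          - ((⌊a k⌋ • v - ⌊a l⌋ • v) + (⌊b k⌋ • w - ⌊b l⌋ • w)) = 0 := by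
        rw [← h3]; abel
      rw [← sub_eq_zero]
      exact h4
    rw [key]
    have hvmem : v ∈ AddSubgroup.closure ({v, w} : Set (ℝ × ℝ)) :=
      AddSubgroup.subset_closure (by simp)
    have hwmem : w ∈ AddSubgroup.closure ({v, w} : Set (ℝ × ℝ)) :=
      AddSubgroup.subset_closure (by simp)
    exact add_mem (zsmul_mem hvmem _) (zsmul_mem hwmem _)

theorem maximum_J_is_maximal_for_T
    {n : ℕ} (hn : 3 ≤ n) (e τ : Fin n → ℝ × ℝ)
    (henz : ∀ i, e i ≠ 0) (hτnz : ∀ i, τ i ≠ 0)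
    (henp : ∀ i j, i ≠ j → ∀ c : ℝ, e i ≠ c • e j)
    (hτnp : ∀ i j, i ≠ j → ∀ c : ℝ, τ i ≠ c • τ j)
    (J : Finset (Fin n)) (hJ2 : 2 ≤ J.card)
    (hJdisc : DiscreteTopology
      ↥(AddSubgroup.closure (τ '' J ∪ e '' (Jᶜ : Finset (Fin n)))))
    (hJmaxsize : ∀ J' : Finset (Fin n),
      DiscreteTopology ↥(AddSubgroup.closure (τ '' J' ∪ e '' (J'ᶜ : Finset (Fin n)))) →
      J'.card ≤ J.card) :
    DiscreteTopology ↥(AddSubgroup.closure (τ '' J)) ∧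
    ∀ J' : Finset (Fin n), J ⊆ J' →
      DiscreteTopology ↥(AddSubgroup.closure (τ '' J')) → J' = J := by
  classical
  obtain ⟨j₁, hj₁, j₂, hj₂, hne⟩ :=
    Finset.one_lt_card.mp (lt_of_lt_of_le one_lt_two hJ2)
  have hli : LinearIndependent ℝ ![τ j₁, τ j₂] := by
    rw [linearIndependent_fin2]
    constructor
    · simpa using hτnz j₂
    · intro c hc
      simp only [Matrix.cons_val_one, Matrix.head_cons, Matrix.cons_val_zero] at hc
      exact hτnp j₁ j₂ hne c hc.symm
  have hvG1 : τ j₁ ∈ AddSubgroup.closure (τ '' J ∪ e '' (Jᶜ : Finset (Fin n))) :=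
    AddSubgroup.subset_closure (Or.inl ⟨j₁, by simpa using hj₁, rfl⟩)
  have hwG1 : τ j₂ ∈ AddSubgroup.closure (τ '' J ∪ e '' (Jᶜ : Finset (Fin n))) :=
    AddSubgroup.subset_closure (Or.inl ⟨j₂, by simpa using hj₂, rfl⟩)
  have hΛle : AddSubgroup.closure ({τ j₁, τ j₂} : Set (ℝ × ℝ))
      ≤ AddSubgroup.closure (τ '' J ∪ e '' (Jᶜ : Finset (Fin n))) := by
    rw [AddSubgroup.closure_le]
    intro y hy
    rcases hy with rfl | hy
    · exact hvG1
    · rw [Set.mem_singleton_iff] at hy; subst hy; exact hwG1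
  constructor
  · exact DiscreteTopology.of_subset hJdisc
      (SetLike.coe_subset_coe.mpr (AddSubgroup.closure_mono Set.subset_union_left))
  · intro J' hsub hdisc
    have hvG2 : τ j₁ ∈ AddSubgroup.closure (τ '' J') :=
      AddSubgroup.subset_closure ⟨j₁, by simpa using hsub hj₁, rfl⟩
    have hwG2 : τ j₂ ∈ AddSubgroup.closure (τ '' J') :=
      AddSubgroup.subset_closure ⟨j₂, by simpa using hsub hj₂, rfl⟩
    have hN : ∀ j : Fin n, ∃ N : ℤ, N ≠ 0 ∧
        (j ∈ J' → N • τ j ∈ AddSubgroup.closure (τ '' J ∪ e '' (Jᶜ : Finset (Fin n)))) := by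
      intro j
      by_cases hj : j ∈ J'
      · obtain ⟨N, hN0, hNmem⟩ := aux_torsion (AddSubgroup.closure (τ '' J')) hdisc hli
          hvG2 hwG2 (AddSubgroup.subset_closure ⟨j, by simpa using hj, rfl⟩)
        exact ⟨N, hN0, fun _ => hΛle hNmem⟩
      · exact ⟨1, one_ne_zero, fun h => absurd h hj⟩
    choose N hN0 hNmem using hN
    set Ntot : ℤ := ∏ j : Fin n, N j with hNtotdef
    have hNtot0 : Ntot ≠ 0 := Finset.prod_ne_zero_iff.mpr fun j _ => hN0 j
    have hgen : ∀ g ∈ (τ '' J' ∪ e '' (J'ᶜ : Finset (Fin n))),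
        Ntot • g ∈ AddSubgroup.closure (τ '' J ∪ e '' (Jᶜ : Finset (Fin n))) := by
      rintro g (⟨j, hj, rfl⟩ | ⟨j, hj, rfl⟩)
      · have hjJ' : j ∈ J' := by simpa using hj
        obtain ⟨c, hc⟩ := Finset.dvd_prod_of_mem N (Finset.mem_univ j)
        rw [hNtotdef, hc, mul_comm, mul_smul]
        exact zsmul_mem (hNmem j hjJ') c
      · have hj' : j ∉ J' := by simpa using hj
        have hjJ : j ∈ (Jᶜ : Finset (Fin n)) :=
          Finset.mem_compl.mpr fun hjJ => hj' (hsub hjJ)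
        have hmem : e j ∈ (τ '' J ∪ e '' (Jᶜ : Finset (Fin n)) : Set (ℝ × ℝ)) :=
          Set.mem_union_right _ ⟨j, by simpa using hjJ, rfl⟩
        exact zsmul_mem (AddSubgroup.subset_closure hmem) _
    have hsmul : ∀ y ∈ AddSubgroup.closure (τ '' J' ∪ e '' (J'ᶜ : Finset (Fin n))),
        Ntot • y ∈ AddSubgroup.closure (τ '' J ∪ e '' (Jᶜ : Finset (Fin n))) := by
      intro y hy
      have hle : AddSubgroup.closure (τ '' J' ∪ e '' (J'ᶜ : Finset (Fin n)))
          ≤ AddSubgroup.comap (AddMonoidHom.mk' (fun y : ℝ × ℝ => Ntot • y)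
              (fun a b => smul_add Ntot a b))
            (AddSubgroup.closure (τ '' J ∪ e '' (Jᶜ : Finset (Fin n)))) := by
        rw [AddSubgroup.closure_le]
        intro g hg
        exact hgen g hg
      exact hle hy
    have hdisc3 : DiscreteTopology
        ↥(AddSubgroup.closure (τ '' J' ∪ e '' (J'ᶜ : Finset (Fin n)))) := by
      have hhNe : (Ntot : ℝ) ≠ 0 := by exact_mod_cast hNtot0
      let h : (ℝ × ℝ) ≃ₜ (ℝ × ℝ) := Homeomorph.smulOfNeZero ((Ntot : ℝ)) hhNe
      have himg : (⇑h '' ((AddSubgroup.closure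
            (τ '' J' ∪ e '' (J'ᶜ : Finset (Fin n)))) : Set (ℝ × ℝ)))
          ⊆ ((AddSubgroup.closure (τ '' J ∪ e '' (Jᶜ : Finset (Fin n)))) : Set (ℝ × ℝ)) := by
        rintro _ ⟨y, hy, rfl⟩
        have hy' : h y = (Ntot : ℝ) • y := rfl
        rw [hy', Int.cast_smul_eq_zsmul]
        exact hsmul y hy
      have hdimg : DiscreteTopology
          ↥(⇑h '' ((AddSubgroup.closure
            (τ '' J' ∪ e '' (J'ᶜ : Finset (Fin n)))) : Set (ℝ × ℝ))) :=
        DiscreteTopology.of_subset hJdisc himg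
      exact (h.image ((AddSubgroup.closure
        (τ '' J' ∪ e '' (J'ᶜ : Finset (Fin n)))) : Set (ℝ × ℝ))).isEmbedding.discreteTopology
    exact (Finset.eq_of_subset_of_card_le hsub (hJmaxsize J' hdisc3)).symm
end

section
/- If J, J' ⊆ [n] with J ⊆ J', T(J) is a lattice, T(J') is discrete, and T(J) + E([n] \ J) is a lattice, then T(J') + E([n] \ J) is also a lattice. -/
open Module Submodule

/-- Torsion lemma: if `H ≤ K`, `K` discrete, and `H` contains two ℝ-linearly
independent vectors, then every element of `K` has a nonzero multiple in `H`. -/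
lemma torsion_of_discrete_aux {H K : AddSubgroup (ℝ × ℝ)} (hHK : H ≤ K)
    (hK : DiscreteTopology ↥K)
    {b₁ b₂ : ℝ × ℝ} (hb₁ : b₁ ∈ H) (hb₂ : b₂ ∈ H)
    (hind : LinearIndependent ℝ ![b₁, b₂]) :
    ∀ v ∈ K, ∃ c : ℤ, c ≠ 0 ∧ c • v ∈ H := by
  set L : Submodule ℤ (ℝ × ℝ) := AddSubgroup.toIntSubmodule K with hLdef
  have hLset : (L : Set (ℝ × ℝ)) = (K : Set (ℝ × ℝ)) := rfl
  have hdisc : DiscreteTopology L := hK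
  have hcard : Fintype.card (Fin 2) = finrank ℝ (ℝ × ℝ) := by
    simp [Module.finrank_prod]
  have hspan : span ℝ (L : Set (ℝ × ℝ)) = ⊤ := by
    rw [eq_top_iff, ← hind.span_eq_top_of_card_eq_finrank hcard]
    apply span_le.mpr
    intro x hx
    rcases hx with ⟨i, rfl⟩
    fin_cases i
    · exact subset_span (hHK hb₁)
    · exact subset_span (hHK hb₂)
  have : IsZLattice ℝ L := ⟨hspan⟩
  have hfin : Module.Finite ℤ L := ZLattice.module_finite ℝ L
  have hrank : finrank ℤ L = 2 := by
    rw [ZLattice.rank ℝ L, ← hcard]; simp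
  intro v hv
  set x : Fin 3 → L := ![⟨v, hv⟩, ⟨b₁, hHK hb₁⟩, ⟨b₂, hHK hb₂⟩] with hx
  have hnotind : ¬ LinearIndependent ℤ x := by
    intro h
    have := h.fintype_card_le_finrank
    rw [hrank] at this
    simp at this
  obtain ⟨g, hsum, i, hgi⟩ := Fintype.not_linearIndependent_iff.mp hnotind
  have hsum' : g 0 • v + g 1 • b₁ + g 2 • b₂ = 0 := by
    have := congrArg (Subtype.val) hsum
    simpa [hx, Fin.sum_univ_three, add_assoc] using this
  have hg0 : g 0 ≠ 0 := by
    intro h0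
    have h12 : g 1 • b₁ + g 2 • b₂ = 0 := by
      rw [h0] at hsum'; simpa using hsum'
    have := Fintype.linearIndependent_iff.mp hind (fun i => (g (i.succ) : ℝ)) ?_
    · fin_cases i
      · exact hgi h0
      · exact hgi (by exact_mod_cast this 0)
      · exact hgi (by exact_mod_cast this 1)
    · rw [Fin.sum_univ_two]
      simp only [Matrix.cons_val_zero, Matrix.cons_val_one, Matrix.head_cons]
      rw [Int.cast_smul_eq_zsmul, Int.cast_smul_eq_zsmul]
      exact h12
  refine ⟨g 0, hg0, ?_⟩
  have : g 0 • v = -(g 1 • b₁ + g 2 • b₂) := by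
    rw [eq_neg_iff_add_eq_zero, ← add_assoc]; exact hsum'
  rw [this]
  exact neg_mem (add_mem (zsmul_mem hb₁ _) (zsmul_mem hb₂ _))

/-- A lattice in `ℝ²`: a discrete subgroup containing two linearly independent vectors. -/
def IsLattice (L : AddSubgroup (ℝ × ℝ)) : Prop :=
  DiscreteTopology ↥L ∧ ∃ v ∈ L, ∃ w ∈ L, LinearIndependent ℝ ![v, w]

theorem enlarge_T_preserves_lattice
    {n : ℕ} (e τ : Fin n → ℝ × ℝ)
    (J J' : Finset (Fin n)) (hJJ' : J ⊆ J')
    (hTJ : IsLattice (AddSubgroup.closure (τ '' J)))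
    (hTJ' : DiscreteTopology ↥(AddSubgroup.closure (τ '' J')))
    (hL : IsLattice (AddSubgroup.closure (τ '' J) ⊔
      AddSubgroup.closure (e '' (Jᶜ : Finset (Fin n))))) :
    IsLattice (AddSubgroup.closure (τ '' J') ⊔
      AddSubgroup.closure (e '' (Jᶜ : Finset (Fin n)))) := by
  obtain ⟨hLdisc, v, hv, w, hw, hvw⟩ := hL
  obtain ⟨hTJdisc, b₁, hb₁, b₂, hb₂, hb⟩ := hTJ
  set L : AddSubgroup (ℝ × ℝ) := AddSubgroup.closure (τ '' J) ⊔
    AddSubgroup.closure (e '' (Jᶜ : Finset (Fin n))) with hLdef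
  set M : AddSubgroup (ℝ × ℝ) := AddSubgroup.closure (τ '' J') ⊔
    AddSubgroup.closure (e '' (Jᶜ : Finset (Fin n))) with hMdef
  have hTle : AddSubgroup.closure (τ '' J) ≤ AddSubgroup.closure (τ '' J') :=
    AddSubgroup.closure_mono (Set.image_mono (by exact_mod_cast hJJ'))
  have hLM : L ≤ M := sup_le_sup_right hTle _
  constructor
  · -- discreteness of M
    have key : ∀ j : {j // j ∈ J'}, ∃ c : ℤ, c ≠ 0 ∧
        c • τ j.1 ∈ AddSubgroup.closure (τ '' J) := by
      intro j
      exact torsion_of_discrete_aux hTle hTJ' hb₁ hb₂ hb (τ j.1)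
        (AddSubgroup.subset_closure ⟨j.1, j.2, rfl⟩)
    choose c hc0 hcmem using key
    set k : ℤ := ∏ j ∈ J'.attach, c j with hk
    have hk0 : k ≠ 0 := Finset.prod_ne_zero_iff.mpr fun j _ => hc0 j
    -- D = {x | k • x ∈ L}
    set D : AddSubgroup (ℝ × ℝ) := L.comap (zsmulAddGroupHom k) with hD
    have hMD : M ≤ D := by
      apply sup_le
      · rw [AddSubgroup.closure_le]
        rintro x ⟨j, hj, rfl⟩
        obtain ⟨d, hd⟩ := Finset.dvd_prod_of_mem c (Finset.mem_attach J' ⟨j, hj⟩)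
        show k • τ j ∈ L
        rw [hk, hd, mul_comm, mul_smul]
        exact AddSubgroup.zsmul_mem _ (le_sup_left (α := AddSubgroup (ℝ × ℝ))
          (hcmem ⟨j, hj⟩)) d
      · rw [AddSubgroup.closure_le]
        intro x hx
        show k • x ∈ L
        exact AddSubgroup.zsmul_mem _
          (le_sup_right (α := AddSubgroup (ℝ × ℝ)) (AddSubgroup.subset_closure hx)) k
    have hDdisc : DiscreteTopology ↥D := by
      have hcont : Continuous (fun x : ℝ × ℝ => k • x) := by
        exact (continuous_id (X := ℝ × ℝ)).const_smul k
      have hinj : Function.Injective (fun x : ℝ × ℝ => k • x) :=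
        smul_right_injective (ℝ × ℝ) hk0
      have : DiscreteTopology ↥((fun x : ℝ × ℝ => k • x) ⁻¹' (L : Set (ℝ × ℝ))) :=
        DiscreteTopology.preimage_of_continuous_injective (L : Set (ℝ × ℝ)) hcont hinj
      exact this
    exact DiscreteTopology.of_subset hDdisc hMD
  · exact ⟨v, hLM hv, w, hLM hw, hvw⟩
end

section
/- Let v, w ∈ ℝ² be linearly independent over ℝ and u ∈ ℝ². Then span_ℤ{v, w, u} is discrete if and only if both coordinates of u with respect to the basis (v, w) are rational. -/
open Submodule Module

theorem span_three_discrete_iff_rational_coords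
    (v w u : ℝ × ℝ) (hvw : LinearIndependent ℝ ![v, w])
    (α β : ℝ) (hu : u = α • v + β • w) :
    DiscreteTopology ↥(AddSubgroup.closure {v, w, u}) ↔
      (∃ q : ℚ, α = (q : ℝ)) ∧ (∃ q : ℚ, β = (q : ℝ)) := by
  have hfr : finrank ℝ (ℝ × ℝ) = 2 := by simp
  have hrange : Set.range ![v, w] = {v, w} := by
    simp only [Matrix.range_cons, Matrix.range_empty, Set.union_empty, Set.union_singleton]
    exact Set.pair_comm w v
  have hspanvw : span ℝ ({v, w} : Set (ℝ × ℝ)) = ⊤ := by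
    have := (basisOfLinearIndependentOfCardEqFinrank hvw (by simp [hfr])).span_eq
    rwa [coe_basisOfLinearIndependentOfCardEqFinrank, hrange] at this
  constructor
  · intro hdisc
    set L : Submodule ℤ (ℝ × ℝ) := span ℤ ({v, w, u} : Set (ℝ × ℝ)) with hL
    have hLA : L.toAddSubgroup = AddSubgroup.closure {v, w, u} :=
      span_int_eq_addSubgroupClosure _
    rw [← hLA] at hdisc
    haveI : DiscreteTopology L := hdisc
    have hvL : v ∈ L := subset_span (by simp)
    have hwL : w ∈ L := subset_span (by simp)
    have huL : u ∈ L := subset_span (by simp)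
    haveI : IsZLattice ℝ L := ⟨by
      rw [eq_top_iff, ← hspanvw]
      exact span_le.mpr (Set.insert_subset (subset_span hvL)
        (Set.singleton_subset_iff.mpr (subset_span hwL)))⟩
    haveI := ZLattice.module_finite ℝ L
    haveI := ZLattice.module_free ℝ L
    let b := Module.Free.chooseBasis ℤ L
    let e0 : Basis (Module.Free.ChooseBasisIndex ℤ L) ℝ (ℝ × ℝ) := b.ofZLatticeBasis ℝ L
    have hcard : Fintype.card (Module.Free.ChooseBasisIndex ℤ L) = 2 := by
      rw [← finrank_eq_card_basis e0, hfr]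
    let f : Fin 2 ≃ Module.Free.ChooseBasisIndex ℤ L :=
      (Fintype.equivFinOfCardEq hcard).symm
    let e : Basis (Fin 2) ℝ (ℝ × ℝ) := e0.reindex f.symm
    have hspan : span ℤ (Set.range e) = L := by
      rw [show Set.range ⇑e = Set.range ⇑e0 from e0.range_reindex f.symm]
      exact b.ofZLatticeBasis_span ℝ
    have hint : ∀ x ∈ L, ∀ k, ∃ m : ℤ, (m : ℝ) = e.repr x k := by
      intro x hx k
      rw [← hspan] at hx
      obtain ⟨m, hm⟩ := (e.mem_span_iff_repr_mem ℤ x).mp hx k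
      exact ⟨m, hm⟩
    obtain ⟨a0, ha0⟩ := hint v hvL 0
    obtain ⟨a1, ha1⟩ := hint v hvL 1
    obtain ⟨b0, hb0⟩ := hint w hwL 0
    obtain ⟨b1, hb1⟩ := hint w hwL 1
    obtain ⟨c0, hc0⟩ := hint u huL 0
    obtain ⟨c1, hc1⟩ := hint u huL 1
    have hdet : e.repr v 0 * e.repr w 1 - e.repr w 0 * e.repr v 1 ≠ 0 := by
      have hunit : IsUnit (e.det ![v, w]) :=
        (Basis.is_basis_iff_det e).mp ⟨hvw, by rw [hrange, hspanvw]⟩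
      have : e.det ![v, w] =
          e.repr v 0 * e.repr w 1 - e.repr w 0 * e.repr v 1 := by
        rw [Basis.det_apply, Matrix.det_fin_two]
        simp [Basis.toMatrix_apply]
      rw [this] at hunit
      exact hunit.ne_zero
    have hDz : (↑(a0 * b1 - b0 * a1) : ℝ) ≠ 0 := by
      push_cast
      rw [ha0, ha1, hb0, hb1]
      exact hdet
    have hD : (a0 * b1 - b0 * a1 : ℤ) ≠ 0 := fun h => hDz (by rw [h]; simp)
    have h0 : (c0 : ℝ) = α * a0 + β * b0 := by
      rw [ha0, hb0, hc0, hu]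
      simp [mul_comm]
    have h1 : (c1 : ℝ) = α * a1 + β * b1 := by
      rw [ha1, hb1, hc1, hu]
      simp [mul_comm]
    have hDq : ((a0 * b1 - b0 * a1 : ℤ) : ℚ) ≠ 0 := by exact_mod_cast hD
    constructor
    · refine ⟨((c0 * b1 - b0 * c1 : ℤ) : ℚ) / ((a0 * b1 - b0 * a1 : ℤ) : ℚ), ?_⟩
      have : ((((c0 * b1 - b0 * c1 : ℤ) : ℚ) / ((a0 * b1 - b0 * a1 : ℤ) : ℚ) : ℚ) : ℝ)
          = ((c0 * b1 - b0 * c1 : ℤ) : ℝ) / ((a0 * b1 - b0 * a1 : ℤ) : ℝ) := by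
        push_cast; ring
      rw [this, eq_div_iff hDz]
      push_cast
      linear_combination (-(b1 : ℝ)) * h0 + (b0 : ℝ) * h1
    · refine ⟨((a0 * c1 - c0 * a1 : ℤ) : ℚ) / ((a0 * b1 - b0 * a1 : ℤ) : ℚ), ?_⟩
      have : ((((a0 * c1 - c0 * a1 : ℤ) : ℚ) / ((a0 * b1 - b0 * a1 : ℤ) : ℚ) : ℚ) : ℝ)
          = ((a0 * c1 - c0 * a1 : ℤ) : ℝ) / ((a0 * b1 - b0 * a1 : ℤ) : ℝ) := by
        push_cast; ring
      rw [this, eq_div_iff hDz]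
      push_cast
      linear_combination (a1 : ℝ) * h0 - (a0 : ℝ) * h1
  · rintro ⟨⟨q1, rfl⟩, ⟨q2, rfl⟩⟩
    set d : ℤ := (q1.den : ℤ) * (q2.den : ℤ) with hd
    have hdpos : (0 : ℤ) < d := by positivity
    have hd0 : (d : ℝ) ≠ 0 := by exact_mod_cast hdpos.ne'
    have hind : LinearIndependent ℝ ![(d : ℝ)⁻¹ • v, (d : ℝ)⁻¹ • w] := by
      have hinv : (d : ℝ)⁻¹ ≠ 0 := inv_ne_zero hd0
      have h := hvw.units_smul (fun _ => Units.mk0 ((d : ℝ)⁻¹) hinv)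
      have he : (fun _ : Fin 2 => Units.mk0 ((d : ℝ)⁻¹) hinv) • ![v, w]
          = ![(d : ℝ)⁻¹ • v, (d : ℝ)⁻¹ • w] := by
        funext i
        fin_cases i <;> simp [Pi.smul_apply']
      rwa [he] at h
    let g : Basis (Fin 2) ℝ (ℝ × ℝ) :=
      basisOfLinearIndependentOfCardEqFinrank hind (by simp [hfr])
    have hg0 : g 0 = (d : ℝ)⁻¹ • v := by
      rw [coe_basisOfLinearIndependentOfCardEqFinrank]; rfl
    have hg1 : g 1 = (d : ℝ)⁻¹ • w := by
      rw [coe_basisOfLinearIndependentOfCardEqFinrank]; rfl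
    have hvmem : v ∈ span ℤ (Set.range ⇑g) := by
      have : v = (d : ℤ) • g 0 := by
        rw [hg0, ← Int.cast_smul_eq_zsmul ℝ, smul_smul, mul_inv_cancel₀ hd0, one_smul]
      rw [this]
      exact Submodule.smul_mem _ _ (subset_span ⟨0, rfl⟩)
    have hwmem : w ∈ span ℤ (Set.range ⇑g) := by
      have : w = (d : ℤ) • g 1 := by
        rw [hg1, ← Int.cast_smul_eq_zsmul ℝ, smul_smul, mul_inv_cancel₀ hd0, one_smul]
      rw [this]
      exact Submodule.smul_mem _ _ (subset_span ⟨1, rfl⟩)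
    have humem : u ∈ span ℤ (Set.range ⇑g) := by
      have hden1 : ((q1.den : ℝ)) ≠ 0 := Nat.cast_ne_zero.mpr q1.den_nz
      have hden2 : ((q2.den : ℝ)) ≠ 0 := Nat.cast_ne_zero.mpr q2.den_nz
      have hq1 : (q1 : ℝ) = ((q1.num * q2.den : ℤ) : ℝ) * (d : ℝ)⁻¹ := by
        rw [Rat.cast_def, hd]
        push_cast
        field_simp
      have hq2 : (q2 : ℝ) = ((q2.num * q1.den : ℤ) : ℝ) * (d : ℝ)⁻¹ := by
        rw [Rat.cast_def, hd]
        push_cast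
        field_simp
      have : u = (q1.num * q2.den : ℤ) • g 0 + (q2.num * q1.den : ℤ) • g 1 := by
        rw [hg0, hg1, hu, ← Int.cast_smul_eq_zsmul ℝ, ← Int.cast_smul_eq_zsmul ℝ, smul_smul, smul_smul,
          hq1, hq2]
      rw [this]
      exact Submodule.add_mem _
        (Submodule.smul_mem _ _ (subset_span ⟨0, rfl⟩))
        (Submodule.smul_mem _ _ (subset_span ⟨1, rfl⟩))
    have hsub : (AddSubgroup.closure {v, w, u} : Set (ℝ × ℝ))
        ⊆ (span ℤ (Set.range ⇑g) : Set (ℝ × ℝ)) := by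
      have : AddSubgroup.closure {v, w, u} ≤ (span ℤ (Set.range ⇑g)).toAddSubgroup :=
        AddSubgroup.closure_le _ |>.mpr (by
          intro x hx
          rcases hx with rfl | rfl | rfl
          · exact hvmem
          · exact hwmem
          · exact humem)
      exact this
    exact DiscreteTopology.of_subset (inferInstance : DiscreteTopology (span ℤ (Set.range ⇑g))) hsub
end

section
/- Let v₁, …, v_k ∈ ℝ² be vectors spanning ℝ² over ℝ, and pick v_i, v_j forming an ℝ-basis. Then span_ℤ{v₁, …, v_k} is discrete if and only if for every m, the coordinates of v_m with respect to the basis (v_i, v_j) are rational. -/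
open Submodule Module

private lemma rat_den_dvd_cast (q : ℚ) (n : ℕ) (hn : n ≠ 0) (h : q.den ∣ n) :
    ∃ z : ℤ, (q : ℝ) = (z : ℝ) / (n : ℝ) := by
  obtain ⟨t, ht⟩ := h
  refine ⟨q.num * t, ?_⟩
  have hden : (q.den : ℝ) ≠ 0 := by exact_mod_cast q.den_nz
  have hn0 : (n : ℝ) ≠ 0 := by exact_mod_cast hn
  rw [Rat.cast_def]
  push_cast [ht]
  rw [div_eq_div_iff hden (by push_cast [ht] at hn0 ⊢; exact hn0)]
  ring

theorem span_discrete_iff_rational_coords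
    {k : ℕ} (v : Fin k → ℝ × ℝ)
    (hspan : Submodule.span ℝ (Set.range v) = ⊤)
    (i j : Fin k) (hij : LinearIndependent ℝ ![v i, v j]) :
    DiscreteTopology ↥(AddSubgroup.closure (Set.range v)) ↔
      ∀ m : Fin k, ∃ α β : ℚ, v m = (α : ℝ) • v i + (β : ℝ) • v j := by
  have hL : (Submodule.span ℤ (Set.range v)).toAddSubgroup
      = AddSubgroup.closure (Set.range v) :=
    Submodule.span_int_eq_addSubgroupClosure _
  set L : Submodule ℤ (ℝ × ℝ) := Submodule.span ℤ (Set.range v) with hLdef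
  rw [← hL]
  have hcard : Fintype.card (Fin 2) = finrank ℝ (ℝ × ℝ) := by
    simp [finrank_prod]
  constructor
  · intro hdisc
    haveI hdisc' : DiscreteTopology L := hdisc
    haveI : IsZLattice ℝ L := ⟨by
      rw [hLdef, Submodule.span_span_of_tower]; exact hspan⟩
    have hrank : finrank ℤ L = 2 := by
      rw [ZLattice.rank ℝ L, ← hcard]; simp
    intro m
    -- the three vectors, as elements of L
    have hmemL : ∀ t : Fin k, v t ∈ L := fun t => subset_span ⟨t, rfl⟩
    set w : Fin 3 → L := ![⟨v i, hmemL i⟩, ⟨v j, hmemL j⟩, ⟨v m, hmemL m⟩] with hw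
    have hnli : ¬ LinearIndependent ℤ w := by
      intro h
      have := h.fintype_card_le_finrank
      rw [hrank] at this
      simp at this
    obtain ⟨g, hg, t, hgt⟩ := Fintype.not_linearIndependent_iff.mp hnli
    have hsum : (g 0 : ℝ) • v i + (g 1 : ℝ) • v j + (g 2 : ℝ) • v m = 0 := by
      have := congrArg (Subtype.val) hg
      simp only [AddSubmonoidClass.coe_finset_sum, Fin.sum_univ_three, hw] at this
      simpa [Int.cast_smul_eq_zsmul ℝ] using this
    have hg2 : g 2 ≠ 0 := by
      intro h2
      have hz := Fintype.linearIndependent_iff.mp hij ![(g 0 : ℝ), (g 1 : ℝ)] (by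
        rw [Fin.sum_univ_two]
        simp only [Matrix.cons_val_zero, Matrix.cons_val_one, Matrix.head_cons]
        rw [h2] at hsum; simpa using hsum)
      have h0 : g 0 = 0 := by
        have := hz 0; simp at this; exact_mod_cast this
      have h1 : g 1 = 0 := by
        have := hz 1; simp at this; exact_mod_cast this
      fin_cases t <;> simp_all
    have hg2R : (g 2 : ℝ) ≠ 0 := Int.cast_ne_zero.mpr hg2
    refine ⟨-(g 0) / (g 2), -(g 1) / (g 2), ?_⟩
    have h3 : (g 2 : ℝ) • v m = (-(g 0 : ℝ)) • v i + (-(g 1 : ℝ)) • v j := by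
      rw [neg_smul, neg_smul, ← neg_add]
      exact eq_neg_of_add_eq_zero_right hsum
    have h4 : v m = (g 2 : ℝ)⁻¹ • ((-(g 0 : ℝ)) • v i + (-(g 1 : ℝ)) • v j) := by
      rw [← h3, inv_smul_smul₀ hg2R]
    rw [h4, smul_add, smul_smul, smul_smul]
    push_cast
    rw [div_eq_inv_mul, div_eq_inv_mul]
  · intro hr
    choose A B hAB using hr
    set D : ℕ := ∏ m : Fin k, ((A m).den * (B m).den) with hD
    have hDpos : 0 < D :=
      Finset.prod_pos fun m _ => Nat.mul_pos (A m).pos (B m).pos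
    have hD0 : D ≠ 0 := hDpos.ne'
    have hDR : (D : ℝ) ≠ 0 := Nat.cast_ne_zero.mpr hD0
    let b : Basis (Fin 2) ℝ (ℝ × ℝ) := basisOfLinearIndependentOfCardEqFinrank hij hcard
    have hb : ⇑b = ![v i, v j] := coe_basisOfLinearIndependentOfCardEqFinrank hij hcard
    have hu : ∀ _ : Fin 2, IsUnit ((D : ℝ)⁻¹) :=
      fun _ => (isUnit_iff_ne_zero.mpr (inv_ne_zero hDR))
    let c : Basis (Fin 2) ℝ (ℝ × ℝ) := b.isUnitSMul hu
    have hc0 : c 0 = (D : ℝ)⁻¹ • v i := by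
      rw [Basis.isUnitSMul_apply, hb]; simp
    have hc1 : c 1 = (D : ℝ)⁻¹ • v j := by
      rw [Basis.isUnitSMul_apply, hb]; simp
    have hmem : ∀ m : Fin k, v m ∈ span ℤ (Set.range c) := by
      intro m
      have hdA : (A m).den ∣ D :=
        dvd_trans (dvd_mul_right _ _) (Finset.dvd_prod_of_mem _ (Finset.mem_univ m))
      have hdB : (B m).den ∣ D :=
        dvd_trans (dvd_mul_left _ _) (Finset.dvd_prod_of_mem _ (Finset.mem_univ m))
      obtain ⟨z₁, hz₁⟩ := rat_den_dvd_cast (A m) D hD0 hdA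
      obtain ⟨z₂, hz₂⟩ := rat_den_dvd_cast (B m) D hD0 hdB
      have hvm : v m = z₁ • c 0 + z₂ • c 1 := by
        rw [hAB m, hz₁, hz₂, hc0, hc1,
          ← Int.cast_smul_eq_zsmul ℝ, ← Int.cast_smul_eq_zsmul ℝ, smul_smul, smul_smul,
          div_eq_mul_inv, div_eq_mul_inv]
      rw [hvm]
      exact add_mem (Submodule.smul_mem _ z₁ (subset_span ⟨0, rfl⟩))
        (Submodule.smul_mem _ z₂ (subset_span ⟨1, rfl⟩))
    have hsub : (L : Set (ℝ × ℝ)) ⊆ (span ℤ (Set.range c) : Set (ℝ × ℝ)) := by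
      rw [hLdef]
      exact fun x hx => span_le.mpr (by rintro _ ⟨m, rfl⟩; exact hmem m) hx
    have hd : DiscreteTopology (span ℤ (Set.range ⇑c)) := inferInstance
    exact DiscreteTopology.of_subset hd hsub
end
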